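/- (Tight relaxation) For every γ ≥ 0, min over nonempty proper subsets C ⊂ V of F̂_γ(C) equals the infimum of F_γ(f) over non-constant f ∈ ℝ^V. Moreover, for any non-constant f, F_γ(f) ≥ min_{t} F̂_γ(C^t_f) where C^t_f = {i : f_i > t}, i.e., optimal thresholding never increases the objective. -/
import Mathlib


open Finset

/-- cut(C, C̄) = 2 ∑_{i∈C, j∈C̄} w_{ij} -/
noncomputable def cutW {n : ℕ} (w : Fin n → Fin n → ℝ) (C : Finset (Fin n)) : ℝ :=
  2 * ∑ i ∈ C, ∑ j ∈ Cᶜ, w i j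

/-- generalized volume gvol(C) = ∑_{i∈C} b_i -/
noncomputable def gvol {n : ℕ} (b : Fin n → ℝ) (C : Finset (Fin n)) : ℝ := ∑ i ∈ C, b i

/-- bal(C) = 2 gvol(C) gvol(C̄) / gvol(V) -/
noncomputable def bal {n : ℕ} (b : Fin n → ℝ) (C : Finset (Fin n)) : ℝ :=
  2 * gvol b C * gvol b Cᶜ / gvol b Finset.univ

/-- NCut(C,C̄) = cut(C,C̄)/bal(C) -/
noncomputable def ncut {n : ℕ} (w : Fin n → Fin n → ℝ) (b : Fin n → ℝ) (C : Finset (Fin n)) : ℝ :=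
  cutW w C / bal b C

/-- M̂(C) = 2 ∑_{i∈C, j∈C̄} q^m_{ij}, twice the number of violated must-links -/
noncomputable def Mhat {n : ℕ} (qm : Fin n → Fin n → ℝ) (C : Finset (Fin n)) : ℝ :=
  2 * ∑ i ∈ C, ∑ j ∈ Cᶜ, qm i j

/-- N̂(C) = ∑_{i,j∈C} q^c_{ij} + ∑_{i,j∈C̄} q^c_{ij}, twice the number of violated cannot-links -/
noncomputable def Nhat {n : ℕ} (qc : Fin n → Fin n → ℝ) (C : Finset (Fin n)) : ℝ :=
  (∑ i ∈ C, ∑ j ∈ C, qc i j) + ∑ i ∈ Cᶜ, ∑ j ∈ Cᶜ, qc i j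

/-- F̂_γ(C) = (cut(C,C̄) + γ(M̂(C)+N̂(C))) / bal(C) -/
noncomputable def Fhat {n : ℕ} (w : Fin n → Fin n → ℝ) (b : Fin n → ℝ)
    (qm qc : Fin n → Fin n → ℝ) (γ : ℝ) (C : Finset (Fin n)) : ℝ :=
  (cutW w C + γ * (Mhat qm C + Nhat qc C)) / bal b C

/-- M(f) = ∑_{i,j} q^m_{ij} |f_i - f_j| -/
noncomputable def Mfun {n : ℕ} (qm : Fin n → Fin n → ℝ) (f : Fin n → ℝ) : ℝ :=
  ∑ i, ∑ j, qm i j * |f i - f j|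

/-- N(f) = vol(Q^c)(max f - min f) - ∑_{i,j} q^c_{ij} |f_i - f_j| -/
noncomputable def Nfun {n : ℕ} (qc : Fin n → Fin n → ℝ) (f : Fin n → ℝ) : ℝ :=
  (∑ i, ∑ j, qc i j) * ((⨆ i, f i) - (⨅ i, f i)) - ∑ i, ∑ j, qc i j * |f i - f j|

/-- S(f) = ‖B(f - (⟨f,b⟩/gvol(V)) 1)‖₁ with B = diag(b) -/
noncomputable def Sfun {n : ℕ} (b : Fin n → ℝ) (f : Fin n → ℝ) : ℝ :=
  ∑ i, |b i * (f i - (∑ j, f j * b j) / gvol b Finset.univ)|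

/-- F_γ(f), the continuous relaxation of F̂_γ -/
noncomputable def Fgam {n : ℕ} (w : Fin n → Fin n → ℝ) (b : Fin n → ℝ)
    (qm qc : Fin n → Fin n → ℝ) (γ : ℝ) (f : Fin n → ℝ) : ℝ :=
  ((∑ i, ∑ j, w i j * |f i - f j|) + γ * Mfun qm f + γ * Nfun qc f) / Sfun b f

/-- the superlevel set C^t_f = {i : f_i > t} -/
noncomputable def Ctf {n : ℕ} (f : Fin n → ℝ) (t : ℝ) : Finset (Fin n) :=
  Finset.univ.filter (fun i => t < f i)

/-- Theorem 3 (tight relaxation): for γ ≥ 0 the minimum of F̂_γ over nontrivial subsets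
equals the infimum of F_γ over non-constant functions, and for every non-constant f
optimal thresholding yields a set with no larger value of the objective. -/
lemma sum_mul_abs_ind {n : ℕ} (g : Fin n → Fin n → ℝ) (hg : ∀ i j, g i j = g j i)
    (C : Finset (Fin n)) :
    ∑ i, ∑ j, g i j * |(if i ∈ C then (1:ℝ) else 0) - (if j ∈ C then (1:ℝ) else 0)| =
      2 * ∑ i ∈ C, ∑ j ∈ Cᶜ, g i j := by
  rw [← Finset.sum_add_sum_compl C]
  have hA : ∑ i ∈ C, ∑ j, g i j * |(if i ∈ C then (1:ℝ) else 0) - (if j ∈ C then (1:ℝ) else 0)|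
      = ∑ i ∈ C, ∑ j ∈ Cᶜ, g i j := by
    refine Finset.sum_congr rfl fun i hi => ?_
    rw [← Finset.sum_add_sum_compl C]
    have h0 : ∑ j ∈ C, g i j * |(if i ∈ C then (1:ℝ) else 0) - (if j ∈ C then (1:ℝ) else 0)| = 0 :=
      Finset.sum_eq_zero fun j hj => by simp [hi, hj]
    rw [h0, zero_add]
    refine Finset.sum_congr rfl fun j hj => ?_
    have hj' : j ∉ C := Finset.mem_compl.mp hj
    simp [hi, hj']
  have hB : ∑ i ∈ Cᶜ, ∑ j, g i j * |(if i ∈ C then (1:ℝ) else 0) - (if j ∈ C then (1:ℝ) else 0)|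
      = ∑ i ∈ C, ∑ j ∈ Cᶜ, g i j := by
    have : ∀ i ∈ Cᶜ, ∑ j, g i j * |(if i ∈ C then (1:ℝ) else 0) - (if j ∈ C then (1:ℝ) else 0)|
        = ∑ j ∈ C, g i j := by
      intro i hi
      have hi' : i ∉ C := Finset.mem_compl.mp hi
      rw [← Finset.sum_add_sum_compl C]
      have h0 : ∑ j ∈ Cᶜ, g i j * |(if i ∈ C then (1:ℝ) else 0) - (if j ∈ C then (1:ℝ) else 0)| = 0 :=
        Finset.sum_eq_zero fun j hj => by simp [hi', Finset.mem_compl.mp hj]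
      rw [h0, add_zero]
      exact Finset.sum_congr rfl fun j hj => by simp [hi', hj]
    rw [Finset.sum_congr rfl this, Finset.sum_comm]
    exact Finset.sum_congr rfl fun i _ => Finset.sum_congr rfl fun j _ => hg j i
  rw [hA, hB]; ring

lemma Nhat_eq {n : ℕ} (qc : Fin n → Fin n → ℝ) (hqc : ∀ i j, qc i j = qc j i)
    (C : Finset (Fin n)) :
    Nhat qc C = (∑ i, ∑ j, qc i j) - 2 * ∑ i ∈ C, ∑ j ∈ Cᶜ, qc i j := by
  have h1 : ∀ i : Fin n, ∑ j, qc i j = (∑ j ∈ C, qc i j) + ∑ j ∈ Cᶜ, qc i j :=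
    fun i => (Finset.sum_add_sum_compl C _).symm
  have hsplit : (∑ i, ∑ j, qc i j) =
      ((∑ i ∈ C, ∑ j ∈ C, qc i j) + ∑ i ∈ C, ∑ j ∈ Cᶜ, qc i j)
      + ((∑ i ∈ Cᶜ, ∑ j ∈ C, qc i j) + ∑ i ∈ Cᶜ, ∑ j ∈ Cᶜ, qc i j) := by
    rw [← Finset.sum_add_sum_compl C (fun i => ∑ j, qc i j)]
    rw [Finset.sum_congr rfl (fun i _ => h1 i), Finset.sum_add_distrib,
        Finset.sum_congr rfl (fun i (_ : i ∈ Cᶜ) => h1 i), Finset.sum_add_distrib]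
  have hsym : ∑ i ∈ Cᶜ, ∑ j ∈ C, qc i j = ∑ i ∈ C, ∑ j ∈ Cᶜ, qc i j := by
    rw [Finset.sum_comm]
    exact Finset.sum_congr rfl fun i _ => Finset.sum_congr rfl fun j _ => hqc j i
  rw [Nhat, hsplit, hsym]; ring

lemma ciSup_eq_max' {n : ℕ} [NeZero n] (f : Fin n → ℝ) :
    (⨆ i, f i) = (Finset.univ.image f).max' (by simp [Finset.univ_nonempty]) := by
  set s := Finset.univ.image f
  have hne : s.Nonempty := by simp [s, Finset.univ_nonempty]
  apply le_antisymm
  · apply ciSup_le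
    intro i
    exact Finset.le_max' s (f i) (Finset.mem_image_of_mem f (Finset.mem_univ i))
  · obtain ⟨i, -, hi⟩ := Finset.mem_image.mp (s.max'_mem hne)
    rw [← hi]
    exact le_ciSup (Set.finite_range f).bddAbove i

lemma ciInf_eq_min' {n : ℕ} [NeZero n] (f : Fin n → ℝ) :
    (⨅ i, f i) = (Finset.univ.image f).min' (by simp [Finset.univ_nonempty]) := by
  set s := Finset.univ.image f
  have hne : s.Nonempty := by simp [s, Finset.univ_nonempty]
  apply le_antisymm
  · obtain ⟨i, -, hi⟩ := Finset.mem_image.mp (s.min'_mem hne)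
    rw [← hi]
    exact ciInf_le (Set.finite_range f).bddBelow i
  · apply le_ciInf
    intro i
    exact Finset.min'_le s (f i) (Finset.mem_image_of_mem f (Finset.mem_univ i))


lemma Fgam_ind {n : ℕ} (hn : 1 < n) (w : Fin n → Fin n → ℝ) (b : Fin n → ℝ)
    (qm qc : Fin n → Fin n → ℝ) (γ : ℝ)
    (hw_symm : ∀ i j, w i j = w j i) (hb : ∀ i, 0 < b i)
    (hqm_symm : ∀ i j, qm i j = qm j i) (hqc_symm : ∀ i j, qc i j = qc j i)
    (C : Finset (Fin n)) (hC1 : C ≠ ∅) (hC2 : C ≠ Finset.univ) :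
    Fgam w b qm qc γ (fun i => if i ∈ C then (1:ℝ) else 0) = Fhat w b qm qc γ C := by
  haveI : NeZero n := ⟨by omega⟩
  set f : Fin n → ℝ := fun i => if i ∈ C then (1:ℝ) else 0 with hf
  obtain ⟨i₀, hi₀⟩ := Finset.nonempty_iff_ne_empty.mpr hC1
  obtain ⟨j₀, hj₀⟩ : Cᶜ.Nonempty := by
    rw [Finset.nonempty_iff_ne_empty]
    simpa [Finset.compl_eq_empty_iff] using hC2
  have hj₀' : j₀ ∉ C := Finset.mem_compl.mp hj₀
  have hsup : (⨆ i, f i) = 1 := by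
    apply le_antisymm
    · apply ciSup_le; intro i; by_cases h : i ∈ C <;> simp [f, h]
    · have := le_ciSup (Set.finite_range f).bddAbove i₀
      simpa [f, hi₀] using this
  have hinf : (⨅ i, f i) = 0 := by
    apply le_antisymm
    · have := ciInf_le (Set.finite_range f).bddBelow j₀
      simpa [f, hj₀'] using this
    · apply le_ciInf; intro i; by_cases h : i ∈ C <;> simp [f, h]
  have habs : ∀ g : Fin n → Fin n → ℝ, (∀ i j, g i j = g j i) →
      ∑ i, ∑ j, g i j * |f i - f j| = 2 * ∑ i ∈ C, ∑ j ∈ Cᶜ, g i j := by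
    intro g hg; exact sum_mul_abs_ind g hg C
  have hgvolV : gvol b Finset.univ = gvol b C + gvol b Cᶜ := by
    rw [gvol, gvol, gvol, ← Finset.sum_add_sum_compl C]
  have hgC : 0 < gvol b C := Finset.sum_pos (fun i _ => hb i) ⟨i₀, hi₀⟩
  have hgCc : 0 < gvol b Cᶜ := Finset.sum_pos (fun i _ => hb i) ⟨j₀, hj₀⟩
  have hgV : 0 < gvol b Finset.univ := by rw [hgvolV]; linarith
  have hmean : (∑ j, f j * b j) = gvol b C := by
    rw [← Finset.sum_add_sum_compl C (fun j => f j * b j), gvol]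
    have h1 : ∑ j ∈ C, f j * b j = ∑ j ∈ C, b j :=
      Finset.sum_congr rfl fun j hj => by simp [f, hj]
    have h2 : ∑ j ∈ Cᶜ, f j * b j = 0 :=
      Finset.sum_eq_zero fun j hj => by simp [f, Finset.mem_compl.mp hj]
    rw [h1, h2, add_zero]
  have hS : Sfun b f = bal b C := by
    rw [Sfun, hmean, ← Finset.sum_add_sum_compl C]
    have h1 : ∑ i ∈ C, |b i * (f i - gvol b C / gvol b Finset.univ)|
        = gvol b C * (gvol b Cᶜ / gvol b Finset.univ) := by
      have : ∀ i ∈ C, |b i * (f i - gvol b C / gvol b Finset.univ)|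
          = b i * (gvol b Cᶜ / gvol b Finset.univ) := by
        intro i hi
        have : f i = 1 := by simp [f, hi]
        rw [this]
        have h1' : (1:ℝ) - gvol b C / gvol b Finset.univ = gvol b Cᶜ / gvol b Finset.univ := by
          field_simp; linarith
        rw [h1', abs_of_nonneg (mul_nonneg (hb i).le (div_nonneg hgCc.le hgV.le))]
      rw [Finset.sum_congr rfl this, ← Finset.sum_mul, ← gvol]
    have h2 : ∑ i ∈ Cᶜ, |b i * (f i - gvol b C / gvol b Finset.univ)|
        = gvol b Cᶜ * (gvol b C / gvol b Finset.univ) := by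
      have : ∀ i ∈ Cᶜ, |b i * (f i - gvol b C / gvol b Finset.univ)|
          = b i * (gvol b C / gvol b Finset.univ) := by
        intro i hi
        have : f i = 0 := by simp [f, Finset.mem_compl.mp hi]
        rw [this]
        rw [show (0:ℝ) - gvol b C / gvol b Finset.univ = -(gvol b C / gvol b Finset.univ) by ring,
          mul_neg, abs_neg, abs_of_nonneg (mul_nonneg (hb i).le (div_nonneg hgC.le hgV.le))]
      rw [Finset.sum_congr rfl this, ← Finset.sum_mul, ← gvol]
    rw [h1, h2, bal]; field_simp; ring
  have hMf : Mfun qm f = Mhat qm C := by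
    rw [Mfun, habs qm hqm_symm, Mhat]
  have hNf : Nfun qc f = Nhat qc C := by
    rw [Nfun, habs qc hqc_symm, hsup, hinf, Nhat_eq qc hqc_symm C]; ring
  have hwf : ∑ i, ∑ j, w i j * |f i - f j| = cutW w C := by
    rw [habs w hw_symm, cutW]
  rw [Fgam, hwf, hMf, hNf, hS, Fhat]
  ring_nf

lemma thresh_main {n : ℕ} (hn : 1 < n) (w : Fin n → Fin n → ℝ) (b : Fin n → ℝ)
    (qm qc : Fin n → Fin n → ℝ) (γ : ℝ) (hγ : 0 ≤ γ)
    (hw_symm : ∀ i j, w i j = w j i) (hw_nonneg : ∀ i j, 0 ≤ w i j)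
    (hb : ∀ i, 0 < b i)
    (hqm_nonneg : ∀ i j, 0 ≤ qm i j) (hqm_symm : ∀ i j, qm i j = qm j i)
    (hqc_nonneg : ∀ i j, 0 ≤ qc i j) (hqc_symm : ∀ i j, qc i j = qc j i)
    (f : Fin n → ℝ) (hf : ∃ i j, f i ≠ f j) :
    ∃ t : ℝ, (⨅ i, f i) ≤ t ∧ t < (⨆ i, f i) ∧
      Fhat w b qm qc γ (Ctf f t) ≤ Fgam w b qm qc γ f := by
  haveI : NeZero n := ⟨by omega⟩
  classical
  set s : Finset ℝ := Finset.univ.image f with hs_def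
  have hmem : ∀ i, f i ∈ s := fun i => Finset.mem_image_of_mem f (Finset.mem_univ i)
  have hsne : s.Nonempty := ⟨f ⟨0, by omega⟩, hmem _⟩
  set k : ℕ := s.card with hk_def
  have hk2 : 2 ≤ k := by
    obtain ⟨i, j, hij⟩ := hf
    exact Finset.one_lt_card.mpr ⟨f i, hmem i, f j, hmem j, hij⟩
  set e : Fin k ≃o {x // x ∈ s} := s.orderIsoOfFin rfl with he_def
  set v : ℕ → ℝ := fun l => if h : l < k then (e ⟨l, h⟩ : ℝ) else 0 with hv_def
  have hv_eq : ∀ (l : ℕ) (hl : l < k), v l = (e ⟨l, hl⟩ : ℝ) := fun l hl => dif_pos hl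
  have hv_mem : ∀ (l : ℕ), l < k → v l ∈ s := by
    intro l hl; rw [hv_eq l hl]; exact (e ⟨l, hl⟩).2
  have hlt : ∀ (l : ℕ) (hlk : l < k) (x : Fin k), v l < (e x : ℝ) ↔ l < (x : ℕ) := by
    intro l hlk x
    rw [hv_eq l hlk, Subtype.coe_lt_coe, e.lt_iff_lt, Fin.lt_def]
  have hvmono : ∀ (l l' : ℕ), l < k → l' < k → l < l' → v l < v l' := by
    intro l l' hl hl' hll
    rw [hv_eq l' hl']
    exact (hlt l hl ⟨l', hl'⟩).mpr hll
  -- v (k-1) is the max, v 0 is the min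
  have hvmax : ∀ a ∈ s, a ≤ v (k - 1) := by
    intro a ha
    by_contra h
    push_neg at h
    have hx : a = (e (e.symm ⟨a, ha⟩) : ℝ) := by rw [e.apply_symm_apply]
    rw [hx] at h
    have h1 := (hlt (k-1) (by omega) (e.symm ⟨a, ha⟩)).mp h
    have h2 := (e.symm ⟨a, ha⟩).isLt
    omega
  have hvmin : ∀ a ∈ s, v 0 ≤ a := by
    intro a ha
    have hx : a = (e (e.symm ⟨a, ha⟩) : ℝ) := by rw [e.apply_symm_apply]
    rcases Nat.eq_zero_or_pos ((e.symm ⟨a, ha⟩ : Fin k) : ℕ) with h0 | h0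
    · rw [hv_eq 0 (by omega),
        show (⟨0, by omega⟩ : Fin k) = e.symm ⟨a, ha⟩ from Fin.ext (by simp [h0]),
        e.apply_symm_apply]
    · rw [hx]
      exact le_of_lt ((hlt 0 (by omega) _).mpr h0)
  have hsup : (⨆ i, f i) = v (k - 1) := by
    apply le_antisymm
    · exact ciSup_le fun i => hvmax _ (hmem i)
    · obtain ⟨i, -, hi⟩ := Finset.mem_image.mp (hv_mem (k-1) (by omega))
      rw [← hi]; exact le_ciSup (Set.finite_range f).bddAbove i
  have hinf : (⨅ i, f i) = v 0 := by
    apply le_antisymm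
    · obtain ⟨i, -, hi⟩ := Finset.mem_image.mp (hv_mem 0 (by omega))
      rw [← hi]; exact ciInf_le (Set.finite_range f).bddBelow i
    · exact le_ciInf fun i => hvmin _ (hmem i)
  -- scalar coarea formula
  have key0 : ∀ a (ha : a ∈ s), ∀ c (hc : c ∈ s), a ≤ c →
      c - a = ∑ l ∈ Finset.range (k-1), (v (l+1) - v l) *
        |(if v l < a then (1:ℝ) else 0) - (if v l < c then (1:ℝ) else 0)| := by
    intro a ha c hc hac
    set p : Fin k := e.symm ⟨a, ha⟩ with hp_def
    set q : Fin k := e.symm ⟨c, hc⟩ with hq_def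
    have hpq : (p : ℕ) ≤ (q : ℕ) := Fin.le_def.mp (e.symm.le_iff_le.mpr (Subtype.mk_le_mk.mpr hac))
    have hea : (e p : ℝ) = a := by rw [hp_def, e.apply_symm_apply]
    have hec : (e q : ℝ) = c := by rw [hq_def, e.apply_symm_apply]
    have hlta : ∀ (l : ℕ), l < k → (v l < a ↔ l < (p : ℕ)) := by
      intro l hl; rw [← hea]; exact hlt l hl p
    have hltc : ∀ (l : ℕ), l < k → (v l < c ↔ l < (q : ℕ)) := by
      intro l hl; rw [← hec]; exact hlt l hl q
    have hterm : ∀ l ∈ Finset.range (k-1),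
        (v (l+1) - v l) * |(if v l < a then (1:ℝ) else 0) - (if v l < c then (1:ℝ) else 0)|
        = if l ∈ Finset.Ico (p : ℕ) (q : ℕ) then v (l+1) - v l else 0 := by
      intro l hl
      have hlk : l < k := by have := Finset.mem_range.mp hl; omega
      by_cases h1 : v l < a
      · have h2 : v l < c := lt_of_lt_of_le h1 hac
        have hlp : l < (p : ℕ) := (hlta l hlk).mp h1
        have : l ∉ Finset.Ico (p : ℕ) (q : ℕ) := by
          simp only [Finset.mem_Ico]; omega
        simp [h1, h2, this]
      · by_cases h2 : v l < c
        · have hlp : ¬ l < (p : ℕ) := fun hc' => h1 ((hlta l hlk).mpr hc')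
          have hlq : l < (q : ℕ) := (hltc l hlk).mp h2
          have : l ∈ Finset.Ico (p : ℕ) (q : ℕ) := by
            simp only [Finset.mem_Ico]; omega
          simp [h1, h2, this]
        · have : l ∉ Finset.Ico (p : ℕ) (q : ℕ) := by
            have h3 : ¬ l < (q : ℕ) := fun hc' => h2 ((hltc l hlk).mpr hc')
            simp only [Finset.mem_Ico]; omega
          simp [h1, h2, this]
    rw [Finset.sum_congr rfl hterm, Finset.sum_ite_mem,
        Finset.inter_eq_right.mpr (by
          intro l hl
          have h1 := (Finset.mem_Ico.mp hl).2
          have h2 : (q : ℕ) < k := q.isLt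
          exact Finset.mem_range.mpr (by omega)),
        Finset.sum_Ico_eq_sub _ hpq, Finset.sum_range_sub, Finset.sum_range_sub]
    have h1 : v (q : ℕ) = c := by rw [hv_eq _ q.isLt, ← hec]
    have h2 : v (p : ℕ) = a := by rw [hv_eq _ p.isLt, ← hea]
    rw [h1, h2]; ring
  have key : ∀ a (ha : a ∈ s), ∀ c (hc : c ∈ s), |a - c| =
      ∑ l ∈ Finset.range (k-1), (v (l+1) - v l) *
        |(if v l < a then (1:ℝ) else 0) - (if v l < c then (1:ℝ) else 0)| := by
    intro a ha c hc
    rcases le_total a c with h | h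
    · rw [abs_of_nonpos (by linarith), neg_sub]; exact key0 a ha c hc h
    · rw [abs_of_nonneg (by linarith)]
      rw [key0 c hc a ha h]
      exact Finset.sum_congr rfl fun l _ => by rw [abs_sub_comm]
  -- coarea for quadratic forms
  have hCtf_ind : ∀ (t : ℝ) (i : Fin n),
      (if i ∈ Ctf f t then (1:ℝ) else 0) = if t < f i then 1 else 0 := by
    intro t i; simp [Ctf]
  have coarea : ∀ g : Fin n → Fin n → ℝ, (∀ i j, g i j = g j i) →
      ∑ i, ∑ j, g i j * |f i - f j| =
      ∑ l ∈ Finset.range (k-1), (v (l+1) - v l) * (2 * ∑ i ∈ Ctf f (v l), ∑ j ∈ (Ctf f (v l))ᶜ, g i j) := by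
    intro g hg
    have step1 : ∀ l : ℕ, (2 * ∑ i ∈ Ctf f (v l), ∑ j ∈ (Ctf f (v l))ᶜ, g i j)
        = ∑ i, ∑ j, g i j * |(if v l < f i then (1:ℝ) else 0) - (if v l < f j then 1 else 0)| := by
      intro l
      rw [← sum_mul_abs_ind g hg (Ctf f (v l))]
      exact Finset.sum_congr rfl fun i _ => Finset.sum_congr rfl fun j _ => by
        rw [hCtf_ind, hCtf_ind]
    calc ∑ i, ∑ j, g i j * |f i - f j|
        = ∑ i, ∑ j, ∑ l ∈ Finset.range (k-1),
            (v (l+1) - v l) * (g i j * |(if v l < f i then (1:ℝ) else 0) - (if v l < f j then 1 else 0)|) := by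
          refine Finset.sum_congr rfl fun i _ => Finset.sum_congr rfl fun j _ => ?_
          rw [key (f i) (hmem i) (f j) (hmem j), Finset.mul_sum]
          exact Finset.sum_congr rfl fun l _ => by ring
      _ = ∑ l ∈ Finset.range (k-1), ∑ i, ∑ j,
            (v (l+1) - v l) * (g i j * |(if v l < f i then (1:ℝ) else 0) - (if v l < f j then 1 else 0)|) := by
          rw [show (∑ i : Fin n, ∑ j : Fin n, ∑ l ∈ Finset.range (k-1),
              (v (l+1) - v l) * (g i j * |(if v l < f i then (1:ℝ) else 0) - (if v l < f j then 1 else 0)|))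
            = ∑ i : Fin n, ∑ l ∈ Finset.range (k-1), ∑ j : Fin n,
              (v (l+1) - v l) * (g i j * |(if v l < f i then (1:ℝ) else 0) - (if v l < f j then 1 else 0)|)
            from Finset.sum_congr rfl fun i _ => Finset.sum_comm]
          exact Finset.sum_comm
      _ = ∑ l ∈ Finset.range (k-1), (v (l+1) - v l) * (2 * ∑ i ∈ Ctf f (v l), ∑ j ∈ (Ctf f (v l))ᶜ, g i j) := by
          refine Finset.sum_congr rfl fun l _ => ?_
          rw [step1 l, Finset.mul_sum]
          exact Finset.sum_congr rfl fun i _ => by rw [Finset.mul_sum]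
  -- level sets are nontrivial
  have hCl_ne : ∀ l : ℕ, l < k - 1 → (Ctf f (v l)).Nonempty := by
    intro l hl
    obtain ⟨i, -, hi⟩ := Finset.mem_image.mp (hv_mem (k-1) (by omega))
    refine ⟨i, Finset.mem_filter.mpr ⟨Finset.mem_univ i, ?_⟩⟩
    rw [hi]
    exact hvmono l (k-1) (by omega) (by omega) (by omega)
  have hCl_nuniv : ∀ l : ℕ, l < k - 1 → Ctf f (v l) ≠ Finset.univ := by
    intro l hl hC
    obtain ⟨i, -, hi⟩ := Finset.mem_image.mp (hv_mem l (by omega))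
    have h1 : i ∈ Ctf f (v l) := hC ▸ Finset.mem_univ i
    have h2 : v l < f i := (Finset.mem_filter.mp h1).2
    rw [hi] at h2
    exact lt_irrefl _ h2
  have hcompl_ne : ∀ C : Finset (Fin n), C ≠ Finset.univ → (Cᶜ : Finset (Fin n)).Nonempty := by
    intro C hC
    rw [Finset.nonempty_iff_ne_empty]
    simpa [Finset.compl_eq_empty_iff] using hC
  have hgV : 0 < gvol b Finset.univ :=
    Finset.sum_pos (fun i _ => hb i) ⟨⟨0, by omega⟩, Finset.mem_univ _⟩
  have hbal_pos : ∀ l : ℕ, l < k - 1 → 0 < bal b (Ctf f (v l)) := by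
    intro l hl
    have h1 : 0 < gvol b (Ctf f (v l)) := Finset.sum_pos (fun i _ => hb i) (hCl_ne l hl)
    have h2 : 0 < gvol b ((Ctf f (v l))ᶜ) :=
      Finset.sum_pos (fun i _ => hb i) (hcompl_ne _ (hCl_nuniv l hl))
    rw [bal]
    positivity
  have hΔ : ∀ l ∈ Finset.range (k-1), 0 < v (l+1) - v l := by
    intro l hl
    have := Finset.mem_range.mp hl
    exact sub_pos.mpr (hvmono l (l+1) (by omega) (by omega) (by omega))
  -- numerator decomposition
  have hNum : ((∑ i, ∑ j, w i j * |f i - f j|) + γ * Mfun qm f + γ * Nfun qc f)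
      = ∑ l ∈ Finset.range (k-1), (v (l+1) - v l) *
          (cutW w (Ctf f (v l)) + γ * (Mhat qm (Ctf f (v l)) + Nhat qc (Ctf f (v l)))) := by
    have hN' : Nfun qc f = ∑ l ∈ Finset.range (k-1), (v (l+1) - v l) *
        ((∑ i, ∑ j, qc i j) - 2 * ∑ i ∈ Ctf f (v l), ∑ j ∈ (Ctf f (v l))ᶜ, qc i j) := by
      rw [Nfun, hsup, hinf, coarea qc hqc_symm, ← Finset.sum_range_sub v (k-1),
        Finset.mul_sum, ← Finset.sum_sub_distrib]
      exact Finset.sum_congr rfl fun l _ => by ring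
    rw [coarea w hw_symm, Mfun, coarea qm hqm_symm, hN', Finset.mul_sum, Finset.mul_sum,
      ← Finset.sum_add_distrib, ← Finset.sum_add_distrib]
    refine Finset.sum_congr rfl fun l _ => ?_
    rw [cutW, Mhat, Nhat_eq qc hqc_symm]
    ring
  -- denominator
  have hb2 : ∀ l : ℕ, 2 * ∑ i ∈ Ctf f (v l), ∑ j ∈ (Ctf f (v l))ᶜ, (b i * b j)
      = bal b (Ctf f (v l)) * gvol b Finset.univ := by
    intro l
    rw [bal, div_mul_cancel₀ _ (ne_of_gt hgV), gvol, gvol, mul_assoc, Finset.sum_mul_sum]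
  have hmu : ∀ i, f i - (∑ j, f j * b j) / gvol b Finset.univ
      = (∑ j, b j * (f i - f j)) / gvol b Finset.univ := by
    intro i
    have h1 : (∑ j, b j * (f i - f j)) = f i * gvol b Finset.univ - ∑ j, f j * b j := by
      rw [gvol, Finset.mul_sum, ← Finset.sum_sub_distrib]
      exact Finset.sum_congr rfl fun j _ => by ring
    rw [h1, sub_div, mul_div_assoc, div_self (ne_of_gt hgV), mul_one]
  have hSle1 : Sfun b f ≤ (∑ i, ∑ j, (b i * b j) * |f i - f j|) / gvol b Finset.univ := by
    rw [Sfun, show (∑ i, ∑ j, (b i * b j) * |f i - f j|) / gvol b Finset.univ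
      = ∑ i, (∑ j, (b i * b j) * |f i - f j|) / gvol b Finset.univ from Finset.sum_div _ _ _]
    refine Finset.sum_le_sum fun i _ => ?_
    calc |b i * (f i - (∑ j, f j * b j) / gvol b Finset.univ)|
        = b i * |∑ j, b j * (f i - f j)| / gvol b Finset.univ := by
          rw [abs_mul, abs_of_nonneg (hb i).le, hmu i, abs_div,
            abs_of_nonneg hgV.le, mul_div_assoc]
      _ ≤ b i * (∑ j, b j * |f i - f j|) / gvol b Finset.univ := by
          have h2 : |∑ j, b j * (f i - f j)| ≤ ∑ j, b j * |f i - f j| := by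
            refine le_trans (Finset.abs_sum_le_sum_abs _ _) ?_
            refine Finset.sum_le_sum fun j _ => ?_
            rw [abs_mul, abs_of_nonneg (hb j).le]
          have h3 : 0 ≤ b i := (hb i).le
          have h4 : (0:ℝ) < gvol b Finset.univ := hgV
          gcongr
      _ = (∑ j, (b i * b j) * |f i - f j|) / gvol b Finset.univ := by
          rw [Finset.mul_sum]
          congr 1
          exact Finset.sum_congr rfl fun j _ => by ring
  have hSle : Sfun b f ≤ ∑ l ∈ Finset.range (k-1), (v (l+1) - v l) * bal b (Ctf f (v l)) := by
    refine le_trans hSle1 (le_of_eq ?_)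
    rw [coarea (fun i j => b i * b j) (fun i j => by ring)]
    rw [Finset.sum_congr rfl (fun l _ => by rw [hb2 l, ← mul_assoc])]
    rw [← Finset.sum_mul, mul_div_assoc, div_self (ne_of_gt hgV), mul_one]
  have hSpos : 0 < Sfun b f := by
    rw [Sfun]
    obtain ⟨i0, hi0⟩ : ∃ i, f i ≠ (∑ j, f j * b j) / gvol b Finset.univ := by
      by_contra hgg; push_neg at hgg
      obtain ⟨i, j, hij⟩ := hf
      exact hij (by rw [hgg i, hgg j])
    refine Finset.sum_pos' (fun i _ => abs_nonneg _) ⟨i0, Finset.mem_univ i0, ?_⟩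
    exact abs_pos.mpr (mul_ne_zero (ne_of_gt (hb i0)) (sub_ne_zero.mpr hi0))
  set D : ℝ := ∑ l ∈ Finset.range (k-1), (v (l+1) - v l) * bal b (Ctf f (v l)) with hD_def
  set Num : ℝ := (∑ i, ∑ j, w i j * |f i - f j|) + γ * Mfun qm f + γ * Nfun qc f with hNum_def
  have hDpos : 0 < D := lt_of_lt_of_le hSpos hSle
  have hNumH_nonneg : ∀ l : ℕ, l < k - 1 →
      0 ≤ cutW w (Ctf f (v l)) + γ * (Mhat qm (Ctf f (v l)) + Nhat qc (Ctf f (v l))) := by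
    intro l _
    have h1 : 0 ≤ cutW w (Ctf f (v l)) := by
      rw [cutW]
      have : 0 ≤ ∑ i ∈ Ctf f (v l), ∑ j ∈ (Ctf f (v l))ᶜ, w i j :=
        Finset.sum_nonneg fun i _ => Finset.sum_nonneg fun j _ => hw_nonneg i j
      linarith
    have h2 : 0 ≤ Mhat qm (Ctf f (v l)) := by
      rw [Mhat]
      have : 0 ≤ ∑ i ∈ Ctf f (v l), ∑ j ∈ (Ctf f (v l))ᶜ, qm i j :=
        Finset.sum_nonneg fun i _ => Finset.sum_nonneg fun j _ => hqm_nonneg i j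
      linarith
    have h3 : 0 ≤ Nhat qc (Ctf f (v l)) := by
      rw [Nhat]
      have g1 : 0 ≤ ∑ i ∈ Ctf f (v l), ∑ j ∈ Ctf f (v l), qc i j :=
        Finset.sum_nonneg fun i _ => Finset.sum_nonneg fun j _ => hqc_nonneg i j
      have g2 : 0 ≤ ∑ i ∈ (Ctf f (v l))ᶜ, ∑ j ∈ (Ctf f (v l))ᶜ, qc i j :=
        Finset.sum_nonneg fun i _ => Finset.sum_nonneg fun j _ => hqc_nonneg i j
      linarith
    nlinarith [mul_nonneg hγ (by linarith : (0:ℝ) ≤ Mhat qm (Ctf f (v l)) + Nhat qc (Ctf f (v l)))]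
  have hNum_nonneg : 0 ≤ Num := by
    rw [hNum]
    refine Finset.sum_nonneg fun l hl => ?_
    exact mul_nonneg (hΔ l hl).le (hNumH_nonneg l (Finset.mem_range.mp hl))
  -- mediant inequality
  obtain ⟨l0, hl0, hmed⟩ : ∃ l0 ∈ Finset.range (k-1),
      (cutW w (Ctf f (v l0)) + γ * (Mhat qm (Ctf f (v l0)) + Nhat qc (Ctf f (v l0))))
        / bal b (Ctf f (v l0)) ≤ Num / D := by
    by_contra hcon
    push_neg at hcon
    have hlt2 : ∑ l ∈ Finset.range (k-1), (v (l+1) - v l) * (Num / D * bal b (Ctf f (v l)))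
        < ∑ l ∈ Finset.range (k-1), (v (l+1) - v l) *
          (cutW w (Ctf f (v l)) + γ * (Mhat qm (Ctf f (v l)) + Nhat qc (Ctf f (v l)))) := by
      refine Finset.sum_lt_sum_of_nonempty ⟨0, Finset.mem_range.mpr (by omega)⟩ fun l hl => ?_
      have hlk := Finset.mem_range.mp hl
      have h1 := hcon l hl
      have h2 : Num / D * bal b (Ctf f (v l))
          < cutW w (Ctf f (v l)) + γ * (Mhat qm (Ctf f (v l)) + Nhat qc (Ctf f (v l))) :=
        (lt_div_iff₀ (hbal_pos l hlk)).mp h1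
      exact mul_lt_mul_of_pos_left h2 (hΔ l hl)
    have heq1 : ∑ l ∈ Finset.range (k-1), (v (l+1) - v l) * (Num / D * bal b (Ctf f (v l)))
        = Num / D * D := by
      rw [hD_def, Finset.mul_sum]
      exact Finset.sum_congr rfl fun l _ => by ring
    rw [heq1, div_mul_cancel₀ _ (ne_of_gt hDpos), ← hNum] at hlt2
    exact lt_irrefl _ hlt2
  have hl0k := Finset.mem_range.mp hl0
  refine ⟨v l0, ?_, ?_, ?_⟩
  · rw [hinf]; exact hvmin _ (hv_mem l0 (by omega))
  · rw [hsup]; exact hvmono l0 (k-1) (by omega) (by omega) (by omega)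
  · calc Fhat w b qm qc γ (Ctf f (v l0)) ≤ Num / D := hmed
      _ ≤ Num / Sfun b f := by
          apply div_le_div_of_nonneg_left hNum_nonneg hSpos hSle
      _ = Fgam w b qm qc γ f := by rw [Fgam, hNum_def]


theorem stmt_5 {n : ℕ} (hn : 1 < n) (w : Fin n → Fin n → ℝ) (b : Fin n → ℝ)
    (qm qc : Fin n → Fin n → ℝ) (γ : ℝ) (hγ : 0 ≤ γ)
    (hw_symm : ∀ i j, w i j = w j i) (hw_nonneg : ∀ i j, 0 ≤ w i j)
    (hb : ∀ i, 0 < b i)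
    (hqm01 : ∀ i j, qm i j = 0 ∨ qm i j = 1) (hqm_symm : ∀ i j, qm i j = qm j i)
    (hqc01 : ∀ i j, qc i j = 0 ∨ qc i j = 1) (hqc_symm : ∀ i j, qc i j = qc j i)
    (hconn : ∀ C : Finset (Fin n), C ≠ ∅ → C ≠ Finset.univ → 0 < cutW w C)
    :
    sInf {x : ℝ | ∃ C : Finset (Fin n), C ≠ ∅ ∧ C ≠ Finset.univ ∧ x = Fhat w b qm qc γ C}
      = sInf {x : ℝ | ∃ f : Fin n → ℝ, (∃ i j, f i ≠ f j) ∧ x = Fgam w b qm qc γ f}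
    ∧ ∀ f : Fin n → ℝ, (∃ i j, f i ≠ f j) →
        ∃ t : ℝ, (⨅ i, f i) ≤ t ∧ t < (⨆ i, f i) ∧
          Fhat w b qm qc γ (Ctf f t) ≤ Fgam w b qm qc γ f := by
  haveI : NeZero n := ⟨by omega⟩
  classical
  have hqm_nonneg : ∀ i j, 0 ≤ qm i j := fun i j => by rcases hqm01 i j with h|h <;> simp [h]
  have hqc_nonneg : ∀ i j, 0 ≤ qc i j := fun i j => by rcases hqc01 i j with h|h <;> simp [h]
  have hthresh : ∀ f : Fin n → ℝ, (∃ i j, f i ≠ f j) →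
      ∃ t : ℝ, (⨅ i, f i) ≤ t ∧ t < (⨆ i, f i) ∧
        Fhat w b qm qc γ (Ctf f t) ≤ Fgam w b qm qc γ f := fun f hf =>
    thresh_main hn w b qm qc γ hγ hw_symm hw_nonneg hb hqm_nonneg hqm_symm
      hqc_nonneg hqc_symm f hf
  refine ⟨?_, hthresh⟩
  set A : Set ℝ :=
    {x : ℝ | ∃ C : Finset (Fin n), C ≠ ∅ ∧ C ≠ Finset.univ ∧ x = Fhat w b qm qc γ C} with hA
  set B : Set ℝ :=
    {x : ℝ | ∃ f : Fin n → ℝ, (∃ i j, f i ≠ f j) ∧ x = Fgam w b qm qc γ f} with hB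
  have hAfin : A.Finite := by
    have hsub : A ⊆ (fun C => Fhat w b qm qc γ C) '' Set.univ := by
      rintro x ⟨C, -, -, rfl⟩; exact ⟨C, trivial, rfl⟩
    exact Set.Finite.subset (Set.finite_univ.image _) hsub
  -- a nontrivial set
  have hC0ne : ({(⟨0, by omega⟩ : Fin n)} : Finset (Fin n)) ≠ ∅ := by simp
  have hC0nu : ({(⟨0, by omega⟩ : Fin n)} : Finset (Fin n)) ≠ Finset.univ := by
    intro h
    have h1 : (⟨1, hn⟩ : Fin n) ∈ ({(⟨0, by omega⟩ : Fin n)} : Finset (Fin n)) :=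
      h ▸ Finset.mem_univ _
    have := Finset.mem_singleton.mp h1
    simp [Fin.ext_iff] at this
  have hAne : A.Nonempty := ⟨_, ⟨_, hC0ne, hC0nu, rfl⟩⟩
  -- indicator functions: every element of A is in B
  have hind : ∀ C : Finset (Fin n), C ≠ ∅ → C ≠ Finset.univ → Fhat w b qm qc γ C ∈ B := by
    intro C h1 h2
    obtain ⟨i0, hi0⟩ := Finset.nonempty_iff_ne_empty.mpr h1
    obtain ⟨j0, hj0⟩ : (Cᶜ : Finset (Fin n)).Nonempty := by
      rw [Finset.nonempty_iff_ne_empty]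
      simpa [Finset.compl_eq_empty_iff] using h2
    have hj0' : j0 ∉ C := Finset.mem_compl.mp hj0
    refine ⟨fun i => if i ∈ C then (1:ℝ) else 0, ⟨i0, j0, by simp [hi0, hj0']⟩, ?_⟩
    exact (Fgam_ind hn w b qm qc γ hw_symm hb hqm_symm hqc_symm C h1 h2).symm
  -- every element of B dominates some element of A
  have hBA : ∀ x ∈ B, ∃ y ∈ A, y ≤ x := by
    rintro x ⟨f, hf, rfl⟩
    obtain ⟨t, ht1, ht2, ht3⟩ := hthresh f hf
    have hCne : Ctf f t ≠ ∅ := by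
      rw [← Finset.nonempty_iff_ne_empty]
      have hsup := ciSup_eq_max' f
      obtain ⟨i, -, hi⟩ := Finset.mem_image.mp
        ((Finset.univ.image f).max'_mem (by simp [Finset.univ_nonempty]))
      refine ⟨i, Finset.mem_filter.mpr ⟨Finset.mem_univ i, ?_⟩⟩
      rw [hi, ← hsup]
      exact ht2
    have hCnu : Ctf f t ≠ Finset.univ := by
      intro hC
      have hinf := ciInf_eq_min' f
      obtain ⟨i, -, hi⟩ := Finset.mem_image.mp
        ((Finset.univ.image f).min'_mem (by simp [Finset.univ_nonempty]))
      have h1 : i ∈ Ctf f t := hC ▸ Finset.mem_univ i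
      have h2 : t < f i := (Finset.mem_filter.mp h1).2
      rw [hi, ← hinf] at h2
      exact absurd ht1 (not_le.mpr h2)
    exact ⟨Fhat w b qm qc γ (Ctf f t), ⟨Ctf f t, hCne, hCnu, rfl⟩, ht3⟩
  have hBne : B.Nonempty := ⟨_, hind _ hC0ne hC0nu⟩
  have hlow : ∀ x ∈ B, sInf A ≤ x := by
    intro x hx
    obtain ⟨y, hy, hyx⟩ := hBA x hx
    exact le_trans (csInf_le hAfin.bddBelow hy) hyx
  have hBbdd : BddBelow B := ⟨sInf A, hlow⟩
  apply le_antisymm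
  · exact le_csInf hBne hlow
  · obtain ⟨C, h1, h2, h3⟩ := hAne.csInf_mem hAfin
    rw [h3]
    exact csInf_le hBbdd (hind C h1 h2)
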